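/- For every integer n ≥ 1 and every antichain 𝓐 in 𝔹∗^n, the cardinality of 𝓐 is at most C(n, ⌊n/3⌋) · 2^⌈2n/3⌉; moreover, the set 𝔹∗^n(⌈2n/3⌉) of words in 𝔹∗^n having exactly ⌈2n/3⌉ entries in 𝔹 is an antichain in 𝔹∗^n of exactly this cardinality. -/

import Mathlib

/-- The alphabet 𝔹• = {0, 1, ∗, •}. -/
inductive BB : Type
  | zero
  | one
  | star
  | reject
deriving DecidableEq

instance : Fintype BB :=
  ⟨{BB.zero, BB.one, BB.star, BB.reject}, fun x => by cases x <;> simp⟩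

/-- The partial order ≼ on 𝔹•: • ≼ 0, 1, ∗ and 0, 1 ≼ ∗ (0, 1 incomparable). -/
def BBle : BB → BB → Prop := fun a b => a = BB.reject ∨ b = BB.star ∨ a = b

/-- Componentwise extension of ≼ to words over 𝔹•. -/
def wordLe {n : ℕ} (u v : Fin n → BB) : Prop := ∀ j, BBle (u j) (v j)

/-! ### Auxiliary arithmetic: the level sizes `C(n,w)·2^w` are maximized at `w = ⌈2n/3⌉`. -/

lemma level_step_up (n w : ℕ) (h : 3 * w ≤ 2 * n - 1) (hn : 1 ≤ n) :
    n.choose w * 2 ^ w ≤ n.choose (w + 1) * 2 ^ (w + 1) := by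
  have key : n.choose (w+1) * (w+1) = n.choose w * (n - w) := Nat.choose_succ_right_eq n w
  have h1 : w + 1 ≤ 2 * (n - w) := by omega
  refine Nat.le_of_mul_le_mul_right ?_ (Nat.succ_pos w)
  calc n.choose w * 2 ^ w * (w + 1) ≤ n.choose w * 2 ^ w * (2 * (n - w)) :=
        Nat.mul_le_mul_left _ h1
    _ = n.choose w * (n - w) * 2 ^ (w+1) := by ring
    _ = n.choose (w+1) * (w+1) * 2 ^ (w+1) := by rw [key]
    _ = n.choose (w+1) * 2 ^ (w+1) * (w+1) := by ring

lemma level_step_down (n w : ℕ) (h : 2 * n ≤ 3 * w) :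
    n.choose (w + 1) * 2 ^ (w + 1) ≤ n.choose w * 2 ^ w := by
  have key : n.choose (w+1) * (w+1) = n.choose w * (n - w) := Nat.choose_succ_right_eq n w
  have h1 : 2 * (n - w) ≤ w + 1 := by omega
  refine Nat.le_of_mul_le_mul_right ?_ (Nat.succ_pos w)
  calc n.choose (w+1) * 2 ^ (w+1) * (w+1) = n.choose (w+1) * (w+1) * 2 ^ (w+1) := by ring
    _ = n.choose w * (n - w) * 2 ^ (w+1) := by rw [key]
    _ = n.choose w * 2 ^ w * (2 * (n - w)) := by ring
    _ ≤ n.choose w * 2 ^ w * (w + 1) := Nat.mul_le_mul_left _ h1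

lemma level_max (n : ℕ) (hn : 1 ≤ n) (w : ℕ) :
    n.choose w * 2 ^ w ≤ n.choose ((2 * n + 2) / 3) * 2 ^ ((2 * n + 2) / 3) := by
  set k := (2 * n + 2) / 3 with hk
  have hup : ∀ d : ℕ, n.choose (k - d) * 2 ^ (k - d) ≤ n.choose k * 2 ^ k := by
    intro d
    induction d with
    | zero => simp
    | succ d ih =>
      rcases le_or_gt k d with h | h
      · have : k - (d+1) = k - d := by omega
        rw [this]; exact ih
      · have h2 : k - (d + 1) + 1 = k - d := by omega
        have hs : 3 * (k - (d+1)) ≤ 2 * n - 1 := by omega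
        calc n.choose (k - (d+1)) * 2 ^ (k - (d+1))
            ≤ n.choose (k - (d+1) + 1) * 2 ^ (k - (d+1) + 1) := level_step_up n _ hs hn
          _ = n.choose (k - d) * 2 ^ (k - d) := by rw [h2]
          _ ≤ _ := ih
  have hdown : ∀ d : ℕ, n.choose (k + d) * 2 ^ (k + d) ≤ n.choose k * 2 ^ k := by
    intro d
    induction d with
    | zero => simp
    | succ d ih =>
      have : k + (d + 1) = (k + d) + 1 := by omega
      rw [this]
      calc n.choose ((k+d)+1) * 2 ^ ((k+d)+1) ≤ n.choose (k+d) * 2 ^ (k+d) :=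
            level_step_down n _ (by omega)
        _ ≤ _ := ih
  rcases le_or_gt w k with h | h
  · have := hup (k - w); rwa [Nat.sub_sub_self h] at this
  · have := hdown (w - k); rwa [Nat.add_sub_cancel' h.le] at this

/-! ### Counting permutations mapping an initial segment onto a given set. -/

open Equiv

lemma subtypeCongr_apply_pos' {α} {p q : α → Prop} [DecidablePred p] [DecidablePred q]
    (e : { x // p x } ≃ { x // q x }) (f : { x // ¬p x } ≃ { x // ¬q x }) (x : α) (hx : p x) :
    Equiv.subtypeCongr e f x = (e ⟨x, hx⟩ : α) := by
  simp only [Equiv.subtypeCongr, Equiv.trans_apply, Equiv.sumCongr_apply]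
  rw [sumCompl_symm_apply_of_pos hx, Sum.map_inl, sumCompl_apply_inl]

lemma subtypeCongr_apply_neg' {α} {p q : α → Prop} [DecidablePred p] [DecidablePred q]
    (e : { x // p x } ≃ { x // q x }) (f : { x // ¬p x } ≃ { x // ¬q x }) (x : α) (hx : ¬p x) :
    Equiv.subtypeCongr e f x = (f ⟨x, hx⟩ : α) := by
  simp only [Equiv.subtypeCongr, Equiv.trans_apply, Equiv.sumCongr_apply]
  rw [sumCompl_symm_apply_of_neg hx, Sum.map_inr, sumCompl_apply_inr]

/-- Permutations matching predicate `p` to predicate `q` biject with pairs of equivs. -/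
def permMatchEquiv {α : Type*} [Fintype α] [DecidableEq α] (p q : α → Prop)
    [DecidablePred p] [DecidablePred q] :
    { π : Perm α // ∀ i, p i ↔ q (π i) } ≃
      ({ x // p x } ≃ { x // q x }) × ({ x // ¬p x } ≃ { x // ¬q x }) where
  toFun π :=
    ⟨⟨fun i => ⟨π.1 i, (π.2 i).1 i.2⟩,
      fun j => ⟨π.1.symm j, by
        have h := π.2 (π.1.symm j); rw [Equiv.apply_symm_apply] at h; exact h.2 j.2⟩,
      fun i => by ext; simp, fun j => by ext; simp⟩,
     ⟨fun i => ⟨π.1 i, fun hq => i.2 ((π.2 i).2 hq)⟩,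
      fun j => ⟨π.1.symm j, by
        have h := π.2 (π.1.symm j); rw [Equiv.apply_symm_apply] at h
        exact fun hp => j.2 (h.1 hp)⟩,
      fun i => by ext; simp, fun j => by ext; simp⟩⟩
  invFun e :=
    ⟨Equiv.subtypeCongr e.1 e.2, by
      intro i
      by_cases h : p i
      · rw [subtypeCongr_apply_pos' e.1 e.2 i h]
        exact ⟨fun _ => (e.1 ⟨i, h⟩).2, fun _ => h⟩
      · rw [subtypeCongr_apply_neg' e.1 e.2 i h]
        exact ⟨fun hp => absurd hp h, fun hq => absurd hq (e.2 ⟨i, h⟩).2⟩⟩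
  left_inv π := by
    ext i
    by_cases h : p i
    · rw [subtypeCongr_apply_pos' _ _ i h]; rfl
    · rw [subtypeCongr_apply_neg' _ _ i h]; rfl
  right_inv e := by
    ext i
    · simp [subtypeCongr_apply_pos' _ _ i.1 i.2]
    · simp [subtypeCongr_apply_neg' _ _ i.1 i.2]

lemma card_fin_lt (n w : ℕ) (hw : w ≤ n) :
    Fintype.card { i : Fin n // (i : ℕ) < w } = w := by
  rw [Fintype.card_subtype]
  have : Finset.univ.filter (fun i : Fin n => (i : ℕ) < w) =
      (Finset.range w).attachFin (fun m hm => lt_of_lt_of_le (Finset.mem_range.mp hm) hw) := by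
    ext i
    simp [Finset.mem_attachFin]
  rw [this, Finset.card_attachFin, Finset.card_range]

lemma perm_count (n : ℕ) (S : Finset (Fin n)) :
    (Finset.univ.filter
        (fun π : Perm (Fin n) => ∀ i : Fin n, ((i : ℕ) < S.card ↔ π i ∈ S))).card
      = (S.card).factorial * (n - S.card).factorial := by
  classical
  have hw : S.card ≤ n := by
    simpa using Finset.card_le_card (Finset.subset_univ S)
  rw [← Fintype.card_subtype]
  rw [Fintype.card_congr (permMatchEquiv (fun i : Fin n => (i : ℕ) < S.card) (· ∈ S))]
  rw [Fintype.card_prod]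
  have c1 : Fintype.card { i : Fin n // (i : ℕ) < S.card } = S.card := card_fin_lt n _ hw
  have c2 : Fintype.card { j : Fin n // j ∈ S } = S.card := Fintype.card_coe S
  have c3 : Fintype.card { i : Fin n // ¬ (i : ℕ) < S.card } = n - S.card := by
    rw [Fintype.card_subtype_compl, c1, Fintype.card_fin]
  have c4 : Fintype.card { j : Fin n // ¬ j ∈ S } = n - S.card := by
    rw [Fintype.card_subtype_compl, c2, Fintype.card_fin]
  rw [Fintype.card_equiv (Fintype.equivOfCardEq (c1.trans c2.symm)),
      Fintype.card_equiv (Fintype.equivOfCardEq (c3.trans c4.symm)), c1, c3]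

/-! ### Counting functions with constrained coordinates. -/

lemma prod_ite_card {n : ℕ} (S : Finset (Fin n)) (a b : ℕ) :
    (∏ j : Fin n, if j ∈ S then a else b) = a ^ S.card * b ^ (n - S.card) := by
  rw [Finset.prod_ite, Finset.prod_const, Finset.prod_const]
  congr 2
  · simp
  · have h2 : Finset.univ.filter (fun j => j ∉ S) = Finset.univ \ S := by
      rw [Finset.filter_not]; congr 1; simp
    rw [h2, Finset.card_sdiff_of_subset (Finset.subset_univ S), Finset.card_univ, Fintype.card_fin]

lemma count_forced {n : ℕ} (S : Finset (Fin n)) (g : Fin n → Bool) :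
    (Finset.univ.filter (fun f : Fin n → Bool => ∀ j ∈ S, f j = g j)).card
      = 2 ^ (n - S.card) := by
  have he : Finset.univ.filter (fun f : Fin n → Bool => ∀ j ∈ S, f j = g j)
      = Fintype.piFinset (fun j => if j ∈ S then {g j} else Finset.univ) := by
    ext f
    simp only [Finset.mem_filter, Finset.mem_univ, true_and, Fintype.mem_piFinset]
    constructor
    · intro h j
      by_cases hj : j ∈ S <;> simp [hj, h j]
    · intro h j hj
      have := h j
      simpa [hj] using this
  rw [he, Fintype.card_piFinset]
  have : ∀ j : Fin n, (if j ∈ S then ({g j} : Finset Bool) else Finset.univ).card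
      = if j ∈ S then 1 else 2 := by
    intro j; by_cases hj : j ∈ S <;> simp [hj]
  rw [Finset.prod_congr rfl (fun j _ => this j), prod_ite_card]
  simp

/-- The set of non-star coordinates of a word. -/
def NS {n : ℕ} (v : Fin n → BB) : Finset (Fin n) :=
  Finset.univ.filter (fun j => v j = BB.zero ∨ v j = BB.one)

lemma count_level_fiber {n : ℕ} (S : Finset (Fin n)) :
    (Finset.univ.filter (fun v : Fin n → BB => (∀ j, v j ≠ BB.reject) ∧
        NS v = S)).card = 2 ^ S.card := by
  have he : Finset.univ.filter (fun v : Fin n → BB => (∀ j, v j ≠ BB.reject) ∧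
        NS v = S)
      = Fintype.piFinset (fun j => if j ∈ S then ({BB.zero, BB.one} : Finset BB)
          else {BB.star}) := by
    ext v
    rw [Finset.mem_filter]
    simp only [Finset.mem_filter, Finset.mem_univ, true_and, Fintype.mem_piFinset, NS]
    constructor
    · rintro ⟨hrej, hS⟩ j
      by_cases hj : j ∈ S
      · have : v j = BB.zero ∨ v j = BB.one := by
          have := hS ▸ hj
          simpa using this
        simp [hj, this]
      · have h1 : ¬ (v j = BB.zero ∨ v j = BB.one) := by
          intro h
          exact hj (hS ▸ (by simpa using h))
        have h2 := hrej j
        cases h : v j <;> simp_all [hj]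
    · intro h
      have hrej : ∀ j, v j ≠ BB.reject := by
        intro j hj'
        have := h j
        by_cases hj : j ∈ S <;> simp [hj, hj'] at this
      refine ⟨hrej, ?_⟩
      ext j
      have := h j
      by_cases hj : j ∈ S
      · simp only [hj, if_pos] at this
        simp only [Finset.mem_filter, Finset.mem_univ, true_and, hj, iff_true]
        simpa using this
      · simp only [hj, if_neg, not_false_iff, Finset.mem_singleton] at this
        simp only [Finset.mem_filter, Finset.mem_univ, true_and, hj, iff_false]
        simp [this]
  rw [he, Fintype.card_piFinset]
  have : ∀ j : Fin n, (if j ∈ S then ({BB.zero, BB.one} : Finset BB)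
      else ({BB.star} : Finset BB)).card = if j ∈ S then 2 else 1 := by
    intro j; by_cases hj : j ∈ S <;> simp [hj]
  rw [Finset.prod_congr rfl (fun j _ => this j), prod_ite_card]
  simp

/-! ### Maximal chains in the subcube poset. -/

/-- A maximal chain is encoded by a permutation (order in which coordinates get fixed)
and a boolean assignment (the values they get fixed to); `onChain v c` says that the
word `v` lies on the chain `c`. -/
def onChain {n : ℕ} (v : Fin n → BB) (c : Perm (Fin n) × (Fin n → Bool)) : Prop :=
  (∀ i : Fin n, ((i : ℕ) < (NS v).card ↔ c.1 i ∈ NS v)) ∧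
  (∀ j ∈ NS v, v j = (if c.2 j then BB.one else BB.zero))

instance {n : ℕ} (v : Fin n → BB) (c : Perm (Fin n) × (Fin n → Bool)) :
    Decidable (onChain v c) := by
  unfold onChain; infer_instance

lemma NS_card_le {n : ℕ} (v : Fin n → BB) : (NS v).card ≤ n := by
  simpa using Finset.card_le_card (Finset.subset_univ (NS v))

lemma mem_NS_iff {n : ℕ} (v : Fin n → BB) (j : Fin n) :
    j ∈ NS v ↔ (v j = BB.zero ∨ v j = BB.one) := by
  simp [NS]

/-- Two words on a common chain are comparable. -/
lemma chain_comp {n : ℕ} (v v' : Fin n → BB) (hv' : ∀ j, v' j ≠ BB.reject)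
    (c : Perm (Fin n) × (Fin n → Bool)) (h : onChain v c) (h' : onChain v' c)
    (hle : (NS v').card ≤ (NS v).card) : wordLe v v' := by
  intro j
  rcases hj : v' j with _ | _ | _ | _
  case star => exact Or.inr (Or.inl rfl)
  case reject => exact absurd hj (hv' j)
  all_goals {
    have hjNS' : j ∈ NS v' := by rw [mem_NS_iff, hj]; simp
    set i := c.1.symm j with hi
    have hci : c.1 i = j := Equiv.apply_symm_apply _ _
    have hlt' : (i : ℕ) < (NS v').card := (h'.1 i).2 (by rw [hci]; exact hjNS')
    have hjNS : j ∈ NS v := by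
      rw [← hci]; exact (h.1 i).1 (lt_of_lt_of_le hlt' hle)
    refine Or.inr (Or.inr ?_)
    rw [h.2 j hjNS, ← h'.2 j hjNS']
    exact hj
  }

/-- The number of chains through a word with `w` non-star coordinates is
`w! (n-w)! 2^(n-w)`. -/
lemma chain_count {n : ℕ} (v : Fin n → BB) (hv : ∀ j, v j ≠ BB.reject) :
    (Finset.univ.filter (fun c : Perm (Fin n) × (Fin n → Bool) => onChain v c)).card
      = (NS v).card.factorial * (n - (NS v).card).factorial * 2 ^ (n - (NS v).card) := by
  classical
  have hsplit : (Finset.univ : Finset (Perm (Fin n) × (Fin n → Bool))).filter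
        (fun c => onChain v c)
      = (Finset.univ.filter
          (fun π : Perm (Fin n) => ∀ i : Fin n, ((i : ℕ) < (NS v).card ↔ π i ∈ NS v))) ×ˢ
        (Finset.univ.filter
          (fun f : Fin n → Bool => ∀ j ∈ NS v, f j = decide (v j = BB.one))) := by
    ext c
    rw [Finset.mem_filter]
    simp only [Finset.mem_filter, Finset.mem_univ, true_and, Finset.mem_product, onChain]
    constructor
    · rintro ⟨h1, h2⟩
      refine ⟨h1, fun j hj => ?_⟩
      have := h2 j hj
      rcases hjv : v j with _ | _ | _ | _ <;> rw [hjv] at this <;>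
        cases hc : c.2 j <;> simp [hc] at this ⊢ <;> simp [hjv]
    · rintro ⟨h1, h2⟩
      refine ⟨h1, fun j hj => ?_⟩
      have hd := h2 j hj
      have := (mem_NS_iff v j).1 hj
      rcases this with h | h <;> rw [h] at hd ⊢ <;> simp at hd <;> simp [hd]
  rw [hsplit, Finset.card_product, perm_count, count_forced]

theorem antichain_Bstar_bound (n : ℕ) (hn : 1 ≤ n)
    (A : Finset (Fin n → BB))
    (hA : ∀ v ∈ A, ∀ j, v j ≠ BB.reject)
    (hanti : ∀ v ∈ A, ∀ w ∈ A, wordLe v w → v = w) :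
    A.card ≤ n.choose (n / 3) * 2 ^ ((2 * n + 2) / 3) ∧
    ∀ W : Finset (Fin n → BB),
      W = Finset.univ.filter (fun v =>
        (∀ j, v j ≠ BB.reject) ∧
        (Finset.univ.filter
            (fun j => v j = BB.zero ∨ v j = BB.one)).card = (2 * n + 2) / 3) →
      (∀ v ∈ W, ∀ w ∈ W, wordLe v w → v = w) ∧
      W.card = n.choose (n / 3) * 2 ^ ((2 * n + 2) / 3) := by
  classical
  set k := (2 * n + 2) / 3 with hk
  have hkn : k ≤ n := by omega
  have hchoose : n.choose (n / 3) = n.choose k := by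
    have h3 : n / 3 = n - k := by omega
    rw [h3, Nat.choose_symm hkn]
  set M := n.choose (n / 3) * 2 ^ k with hM
  have hMk : M = n.choose k * 2 ^ k := by rw [hM, hchoose]
  set K := n.factorial * 2 ^ n with hK
  have hKpos : 0 < K := Nat.mul_pos (Nat.factorial_pos n) (Nat.pow_pos (n := n) (by norm_num))
  constructor
  · -- LYM-type bound via maximal chains
    have claim1 : ∀ v ∈ A, K ≤
        (Finset.univ.filter (fun c : Perm (Fin n) × (Fin n → Bool) => onChain v c)).card * M := by
      intro v hv
      rw [chain_count v (hA v hv)]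
      set w := (NS v).card with hwdef
      have hw : w ≤ n := NS_card_le v
      have hfac : n.choose w * w.factorial * (n - w).factorial = n.factorial :=
        Nat.choose_mul_factorial_mul_factorial hw
      have hpow : 2 ^ n = 2 ^ w * 2 ^ (n - w) := by
        rw [← pow_add, Nat.add_sub_cancel' hw]
      have hlev : n.choose w * 2 ^ w ≤ M := by
        rw [hMk]; exact level_max n hn w
      calc K = (n.choose w * w.factorial * (n - w).factorial) * (2 ^ w * 2 ^ (n - w)) := by
            rw [hK, hfac, hpow]
        _ = (n.choose w * 2 ^ w) * (w.factorial * (n - w).factorial * 2 ^ (n - w)) := by ring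
        _ ≤ M * (w.factorial * (n - w).factorial * 2 ^ (n - w)) :=
            Nat.mul_le_mul_right _ hlev
        _ = w.factorial * (n - w).factorial * 2 ^ (n - w) * M := by ring
    have claim2 : ∑ v ∈ A,
        (Finset.univ.filter (fun c : Perm (Fin n) × (Fin n → Bool) => onChain v c)).card ≤ K := by
      have hcc : ∀ c : Perm (Fin n) × (Fin n → Bool),
          (A.filter (fun v => onChain v c)).card ≤ 1 := by
        intro c
        rw [Finset.card_le_one]
        intro v hv v' hv'
        rw [Finset.mem_filter] at hv hv'
        rcases le_total ((NS v').card) ((NS v).card) with h | h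
        · exact hanti v hv.1 v' hv'.1 (chain_comp v v' (hA v' hv'.1) c hv.2 hv'.2 h)
        · exact (hanti v' hv'.1 v hv.1 (chain_comp v' v (hA v hv.1) c hv'.2 hv.2 h)).symm
      calc ∑ v ∈ A, (Finset.univ.filter
              (fun c : Perm (Fin n) × (Fin n → Bool) => onChain v c)).card
          = ∑ v ∈ A, ∑ c : Perm (Fin n) × (Fin n → Bool), if onChain v c then 1 else 0 := by
            refine Finset.sum_congr rfl (fun v _ => ?_)
            rw [Finset.card_filter]
        _ = ∑ c : Perm (Fin n) × (Fin n → Bool), ∑ v ∈ A, if onChain v c then 1 else 0 :=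
            Finset.sum_comm
        _ = ∑ c : Perm (Fin n) × (Fin n → Bool), (A.filter (fun v => onChain v c)).card := by
            refine Finset.sum_congr rfl (fun c _ => ?_)
            rw [Finset.card_filter]
        _ ≤ ∑ _c : Perm (Fin n) × (Fin n → Bool), 1 :=
            Finset.sum_le_sum (fun c _ => hcc c)
        _ = Fintype.card (Perm (Fin n) × (Fin n → Bool)) := by
            rw [Finset.sum_const, smul_eq_mul, mul_one, Finset.card_univ]
        _ = K := by
            simp only [Fintype.card_prod, Fintype.card_perm, Fintype.card_fun,
              Fintype.card_bool, Fintype.card_fin, hK]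
    have hmain : A.card * K ≤ K * M := by
      calc A.card * K = ∑ _v ∈ A, K := by rw [Finset.sum_const, smul_eq_mul]
        _ ≤ ∑ v ∈ A, (Finset.univ.filter
              (fun c : Perm (Fin n) × (Fin n → Bool) => onChain v c)).card * M :=
            Finset.sum_le_sum claim1
        _ = (∑ v ∈ A, (Finset.univ.filter
              (fun c : Perm (Fin n) × (Fin n → Bool) => onChain v c)).card) * M := by
            rw [Finset.sum_mul]
        _ ≤ K * M := Nat.mul_le_mul_right _ claim2
    have : A.card * K ≤ M * K := by rwa [Nat.mul_comm K M] at hmain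
    exact Nat.le_of_mul_le_mul_right this hKpos
  · -- the middle level is an antichain of the right size
    intro W hW
    have hmemW : ∀ v, v ∈ W ↔ ((∀ j, v j ≠ BB.reject) ∧ (NS v).card = k) := by
      intro v
      rw [hW]
      simp only [Finset.mem_filter, Finset.mem_univ, true_and]
      rfl
    constructor
    · -- antichain
      intro v hv w hw hle
      rw [hmemW] at hv hw
      have hsub : NS w ⊆ NS v := by
        intro j hj
        rw [mem_NS_iff] at hj
        rcases hle j with h | h | h
        · exact absurd h (hv.1 j)
        · rcases hj with hj | hj <;> rw [hj] at h <;> exact absurd h (by simp)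
        · rw [mem_NS_iff, h]; exact hj
      have heq : NS w = NS v :=
        Finset.eq_of_subset_of_card_le hsub (by rw [hv.2, hw.2])
      funext j
      by_cases hj : j ∈ NS w
      · have hj' := (mem_NS_iff w j).1 hj
        rcases hle j with h | h | h
        · exact absurd h (hv.1 j)
        · rcases hj' with hj' | hj' <;> rw [hj'] at h <;> exact absurd h (by simp)
        · exact h
      · have hjv : j ∉ NS v := heq ▸ hj
        rw [mem_NS_iff] at hj hjv
        push_neg at hj hjv
        have h1 := hv.1 j
        have h2 := hw.1 j
        have hvj : v j = BB.star := by
          cases h : v j <;> simp_all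
        have hwj : w j = BB.star := by
          cases h : w j <;> simp_all
        rw [hvj, hwj]
    · -- cardinality
      have hfib : ∀ v ∈ W, NS v ∈ Finset.powersetCard k (Finset.univ : Finset (Fin n)) := by
        intro v hv
        rw [Finset.mem_powersetCard]
        exact ⟨Finset.subset_univ _, ((hmemW v).1 hv).2⟩
      rw [Finset.card_eq_sum_card_fiberwise hfib]
      have hfibcard : ∀ S ∈ Finset.powersetCard k (Finset.univ : Finset (Fin n)),
          (W.filter (fun v => NS v = S)).card = 2 ^ k := by
        intro S hS
        rw [Finset.mem_powersetCard] at hS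
        have : W.filter (fun v => NS v = S)
            = Finset.univ.filter (fun v : Fin n → BB =>
                (∀ j, v j ≠ BB.reject) ∧ NS v = S) := by
          ext v
          simp only [Finset.mem_filter, Finset.mem_univ, true_and, hmemW v]
          constructor
          · rintro ⟨⟨h1, _⟩, h3⟩; exact ⟨h1, h3⟩
          · rintro ⟨h1, h3⟩; exact ⟨⟨h1, by rw [h3, hS.2]⟩, h3⟩
        rw [this, count_level_fiber, hS.2]
      rw [Finset.sum_congr rfl hfibcard, Finset.sum_const, smul_eq_mul,
        Finset.card_powersetCard, Finset.card_univ, Fintype.card_fin, hMk]
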